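/- Let X be a real Banach space with modulus of smoothness ρ_X, let u ∈ X be a nonzero vector, let f be a continuous linear functional on X with ‖f‖ = 1 and f(u) = ‖u‖, and let x ∈ X satisfy f(x) ≤ 0. Then ‖u + x‖ ≤ ‖u‖·(1 + 2·ρ_X(‖x‖/‖u‖)). -/

import Mathlib

/-- The modulus of smoothness (Lindenstrauss modulus) of a real normed space `X`:
`ρ_X(τ) = sup { (‖x + τy‖ + ‖x − τy‖)/2 − 1 : ‖x‖ = ‖y‖ ≤ 1 }`. -/
noncomputable def modSmooth (X : Type*) [NormedAddCommGroup X] [NormedSpace ℝ X] (τ : ℝ) : ℝ :=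
  sSup {r : ℝ | ∃ x y : X, ‖x‖ = ‖y‖ ∧ ‖y‖ ≤ 1 ∧
    r = (‖x + τ • y‖ + ‖x - τ • y‖) / 2 - 1}

/-- Scaled supporting-hyperplane lemma: if `u ≠ 0`, `f` is a norming functional of `u`,
and `f x ≤ 0`, then `‖u + x‖ ≤ ‖u‖ (1 + 2 ρ_X(‖x‖/‖u‖))`. -/
theorem norm_add_le_of_norming_functional_scaled {X : Type*} [NormedAddCommGroup X]
    [NormedSpace ℝ X] [CompleteSpace X]
    (u : X) (hu : u ≠ 0) (f : X →L[ℝ] ℝ) (hf : ‖f‖ = 1) (hfu : f u = ‖u‖)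
    (x : X) (hx : f x ≤ 0) :
    ‖u + x‖ ≤ ‖u‖ * (1 + 2 * modSmooth X (‖x‖ / ‖u‖)) := by
  have hu0 : (0:ℝ) < ‖u‖ := norm_pos_iff.mpr hu
  set τ : ℝ := ‖x‖ / ‖u‖ with hτdef
  have hτ0 : 0 ≤ τ := div_nonneg (norm_nonneg _) (norm_nonneg _)
  set S : Set ℝ := {r : ℝ | ∃ a b : X, ‖a‖ = ‖b‖ ∧ ‖b‖ ≤ 1 ∧
    r = (‖a + τ • b‖ + ‖a - τ • b‖) / 2 - 1} with hS
  have hbdd : BddAbove S := by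
    refine ⟨τ, ?_⟩
    rintro r ⟨a, b, hab, hb1, rfl⟩
    have h1 : ‖a + τ • b‖ ≤ ‖a‖ + τ * ‖b‖ := by
      calc ‖a + τ • b‖ ≤ ‖a‖ + ‖τ • b‖ := norm_add_le _ _
        _ = ‖a‖ + τ * ‖b‖ := by rw [norm_smul, Real.norm_of_nonneg hτ0]
    have h2 : ‖a - τ • b‖ ≤ ‖a‖ + τ * ‖b‖ := by
      calc ‖a - τ • b‖ ≤ ‖a‖ + ‖τ • b‖ := norm_sub_le _ _
        _ = ‖a‖ + τ * ‖b‖ := by rw [norm_smul, Real.norm_of_nonneg hτ0]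
    have hτb : τ * ‖b‖ ≤ τ := by nlinarith
    have ha1 : ‖a‖ ≤ 1 := hab ▸ hb1
    nlinarith
  have hux : ‖u‖ ≤ ‖u - x‖ := by
    have h1 : f (u - x) ≤ ‖f‖ * ‖u - x‖ :=
      le_trans (le_abs_self _) (f.le_opNorm _)
    rw [map_sub, hfu, hf, one_mul] at h1
    linarith
  have hmod : modSmooth X τ = sSup S := rfl
  by_cases hx0 : x = 0
  · have h0 : (0:ℝ) ∈ S := by
      refine ⟨‖u‖⁻¹ • u, ‖u‖⁻¹ • u, rfl, ?_, ?_⟩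
      · rw [norm_smul, norm_inv, Real.norm_of_nonneg (norm_nonneg u),
          inv_mul_cancel₀ hu0.ne']
      · have hτ : τ = 0 := by simp [hτdef, hx0]
        rw [hτ, zero_smul, add_zero, sub_zero, norm_smul, norm_inv,
          Real.norm_of_nonneg (norm_nonneg u), inv_mul_cancel₀ hu0.ne']
        norm_num
    have hρ : (0:ℝ) ≤ modSmooth X τ := by
      rw [hmod]; exact le_csSup hbdd h0
    rw [hx0, add_zero]
    nlinarith
  · have hx0' : (0:ℝ) < ‖x‖ := norm_pos_iff.mpr hx0
    have hkey : (‖u + x‖ / ‖u‖ + ‖u - x‖ / ‖u‖) / 2 - 1 ∈ S := by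
      refine ⟨‖u‖⁻¹ • u, ‖x‖⁻¹ • x, ?_, ?_, ?_⟩
      · rw [norm_smul, norm_smul, norm_inv, norm_inv,
          Real.norm_of_nonneg (norm_nonneg u), Real.norm_of_nonneg (norm_nonneg x),
          inv_mul_cancel₀ hu0.ne', inv_mul_cancel₀ hx0'.ne']
      · rw [norm_smul, norm_inv, Real.norm_of_nonneg (norm_nonneg x),
          inv_mul_cancel₀ hx0'.ne']
      · have hτs : τ • (‖x‖⁻¹ • x) = ‖u‖⁻¹ • x := by
          rw [smul_smul, hτdef, div_eq_mul_inv]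
          rw [mul_comm ‖x‖ ‖u‖⁻¹, mul_assoc, mul_inv_cancel₀ hx0'.ne', mul_one]
        rw [hτs, ← smul_add, ← smul_sub, norm_smul, norm_smul, norm_inv,
          Real.norm_of_nonneg (norm_nonneg u)]
        rw [inv_mul_eq_div, inv_mul_eq_div]
    have hρ : (‖u + x‖ / ‖u‖ + ‖u - x‖ / ‖u‖) / 2 - 1 ≤ modSmooth X τ := by
      rw [hmod]; exact le_csSup hbdd hkey
    have h1 : ‖u + x‖ + ‖u - x‖ ≤ ‖u‖ * (2 + 2 * modSmooth X τ) := by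
      have h := hρ
      rw [← add_div, div_div, sub_le_iff_le_add,
        div_le_iff₀ (by positivity : (0:ℝ) < ‖u‖ * 2)] at h
      nlinarith
    nlinarith
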